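/- arXiv:2201.09981 — 5 statements merged into one kernel-verified Lean document; each statement's English description precedes it below -/
import Mathlib

section
/- In an alternative ring, if v_i and v_j are two elements satisfying v_i v_j + v_j v_i = 0, then for every element a it holds v_i(v_j(v_i a)) = (v_i v_j v_i) a; in particular if additionally v_i^2 = -1 then v_i(v_j(v_i a)) = v_j a. -/
/-- The associator. -/
private def A3 {R : Type*} [NonAssocRing R] (x y z : R) : R :=
  x * y * z - x * (y * z)

section aux
variable {R : Type*} [NonAssocRing R]

/-- Teichmüller identity: pure distributivity, no associativity needed. -/
private lemma tei (a b c d : R) :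
    A3 (a*b) c d - A3 a (b*c) d + A3 a b (c*d) = a * A3 b c d + A3 a b c * d := by
  simp only [A3, mul_sub, sub_mul]
  abel

private lemma lsq (hLA : ∀ x y : R, x * x * y = x * (x * y)) (x y : R) : A3 x x y = 0 := by
  simp [A3, hLA x y]

private lemma rsq (hRA : ∀ x y : R, x * y * y = x * (y * y)) (x y : R) : A3 x y y = 0 := by
  simp [A3, hRA x y]

/-- Linearized left alternative law: associator is skew in first two slots. -/
private lemma swap12 (hLA : ∀ x y : R, x * x * y = x * (x * y)) (x y z : R) :
    A3 x y z = - A3 y x z := by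
  have h := hLA (x + y) z
  simp only [add_mul, mul_add] at h
  simp only [A3]
  linear_combination (norm := abel) h - hLA x z - hLA y z

/-- Linearized right alternative law: associator is skew in last two slots. -/
private lemma swap23 (hRA : ∀ x y : R, x * y * y = x * (y * y)) (x y z : R) :
    A3 x y z = - A3 x z y := by
  have h := hRA x (y + z)
  simp only [add_mul, mul_add] at h
  simp only [A3]
  linear_combination (norm := abel) h - hRA x y - hRA x z

/-- Key step: `A3 x y (x*z) = A3 (x*x) y z - x * A3 x y z`. -/
private lemma step4 (hLA : ∀ x y : R, x * x * y = x * (x * y))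
    (hRA : ∀ x y : R, x * y * y = x * (y * y)) (x y z : R) :
    A3 x y (x*z) = A3 (x*x) y z - x * A3 x y z := by
  have t := tei x x z y
  simp only [lsq hLA, zero_mul, mul_zero, add_zero] at t
  -- t : A3 (x*x) z y - A3 x (x*z) y + 0 = x * A3 x z y
  rw [swap23 hRA (x*x) z y, swap23 hRA x (x*z) y, swap23 hRA x z y, mul_neg] at t
  linear_combination (norm := abel) t

/-- `A3 (y*x) x z = - (x * A3 x y z)`. -/
private lemma step3 (hLA : ∀ x y : R, x * x * y = x * (x * y))
    (hRA : ∀ x y : R, x * y * y = x * (y * y)) (x y z : R) :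
    A3 (y*x) x z = - (x * A3 x y z) := by
  have t := tei y x x z
  simp only [lsq hLA, rsq hRA, zero_mul, mul_zero, zero_add, add_zero] at t
  rw [swap12 hLA y (x*x) z, swap12 hLA y x (x*z), step4 hLA hRA] at t
  linear_combination (norm := abel) t

/-- Left Moufang combination. -/
private lemma moufang (hLA : ∀ x y : R, x * x * y = x * (x * y))
    (hRA : ∀ x y : R, x * y * y = x * (y * y)) (x y z : R) :
    A3 (x*y) x z + A3 x y (x*z) = 0 := by
  have t := tei x y x z
  have hf : A3 x y x = 0 := by
    rw [swap12 hLA x y x, swap23 hRA y x x, rsq hRA, neg_zero, neg_zero]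
  rw [hf, zero_mul, add_zero] at t
  rw [swap12 hLA x (y*x) z, step3 hLA hRA, neg_neg,
      swap12 hLA y x z, mul_neg, step4 hLA hRA] at t
  linear_combination (norm := abel) t + step4 hLA hRA x y z

end aux

/-- In an alternative ring, if `v` and `w` satisfy `v*w + w*v = 0` then for every
element `a` one has `v(w(va)) = ((vw)v)a` (by Artin's theorem the product `v w v`
is unambiguous); in particular if moreover `v^2 = -1` then `v(w(va)) = w a`. -/
theorem alternative_vwv_assoc {R : Type*} [NonAssocRing R]
    (hLA : ∀ x y : R, x * x * y = x * (x * y))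
    (hRA : ∀ x y : R, x * y * y = x * (y * y))
    (hFA : ∀ x y : R, x * y * x = x * (y * x))
    (v w : R) (hanti : v * w + w * v = 0) :
    (∀ a : R, v * (w * (v * a)) = ((v * w) * v) * a) ∧
    (v * v = -1 → ∀ a : R, v * (w * (v * a)) = w * a) := by
  have main : ∀ a : R, v * (w * (v * a)) = ((v * w) * v) * a := by
    intro a
    have m := moufang hLA hRA v w a
    simp only [A3] at m
    linear_combination (norm := abel) -m
  refine ⟨main, fun hv a => ?_⟩
  have hwv : w * v = -(v * w) := by linear_combination (norm := abel) hanti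
  have hvwv : (v * w) * v = w := by
    rw [hFA, hwv, mul_neg, ← hLA, hv, neg_one_mul, neg_neg]
  rw [main a, hvwv]
end

section
/- Let M be a real subspace of a real alternative *-algebra A with ℝ ⊆ M ⊆ Q_A, equipped with a norm satisfying ‖x‖² = n(x) for x ∈ M, arising from an inner product ⟨·,·⟩ on A. Then for all x, y ∈ M one has ⟨x, y⟩ = t(x y^c)/2, and consequently (t(x y^c))² ≤ 4 n(x) n(y), with equality if and only if x y^c is real. -/
/-- The quadratic cone of a real *-algebra `A`: the union of the real line with
the set of elements whose trace `t(x) = x + xᶜ` and norm `n(x) = x xᶜ` are real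
and satisfy `4 n(x) > t(x)²`. -/
def quadCone (A : Type*) [NonAssocRing A] [Module ℝ A] [Star A] : Set A :=
  {x | (∃ r : ℝ, x = r • (1 : A)) ∨
    ∃ r s : ℝ, x + star x = r • (1 : A) ∧ x * star x = s • (1 : A) ∧ r ^ 2 < 4 * s}

/-- Let `M` be a real subspace of a real alternative *-algebra `A` with
`ℝ ⊆ M ⊆ Q_A`, equipped with (the inner product `inn` associated to) a norm
satisfying `‖x‖² = n(x)` for `x ∈ M`.  Then for all `x, y ∈ M` one has
`⟨x, y⟩ = t(x yᶜ)/2`, and consequently `(t(x yᶜ))² ≤ 4 n(x) n(y)`, with equality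
if and only if `x yᶜ` is real. -/
theorem inner_eq_half_trace_and_cauchy_schwarz {A : Type*} [NonAssocRing A]
    [Module ℝ A] [IsScalarTower ℝ A A] [SMulCommClass ℝ A A]
    [StarRing A] [StarModule ℝ A]
    (hLA : ∀ x y : A, x * x * y = x * (x * y))
    (hRA : ∀ x y : A, x * y * y = x * (y * y))
    (hFA : ∀ x y : A, x * y * x = x * (y * x))
    (inn : A →ₗ[ℝ] A →ₗ[ℝ] ℝ)
    (hsymm : ∀ x y : A, inn x y = inn y x)
    (hpos : ∀ x : A, 0 ≤ inn x x)
    (hdef : ∀ x : A, inn x x = 0 → x = 0)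
    (M : Submodule ℝ A) (hone : (1 : A) ∈ M)
    (hMQ : ∀ x ∈ M, x ∈ quadCone A)
    (hnorm : ∀ x ∈ M, (inn x x) • (1 : A) = x * star x) :
    ∀ x ∈ M, ∀ y ∈ M,
      (x * star y + star (x * star y) = (2 * inn x y) • (1 : A)) ∧
      (2 * inn x y) ^ 2 ≤ 4 * (inn x x * inn y y) ∧
      ((2 * inn x y) ^ 2 = 4 * (inn x x * inn y y) ↔
        ∃ r : ℝ, x * star y = r • (1 : A)) := by
  -- polarization / trace identity
  have key : ∀ a ∈ M, ∀ b ∈ M,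
      a * star b + b * star a = (2 * inn a b) • (1 : A) := by
    intro a ha b hb
    have h3 := hnorm (a + b) (M.add_mem ha hb)
    have e : (a + b) * star (a + b)
        = a * star a + b * star b + (a * star b + b * star a) := by
      rw [star_add, add_mul, mul_add, mul_add]; abel
    have hval : inn (a + b) (a + b) = inn a a + inn b b + 2 * inn a b := by
      simp only [map_add, LinearMap.add_apply]
      rw [hsymm b a]; ring
    rw [e, hval, add_smul, add_smul, hnorm a ha, hnorm b hb] at h3
    exact (add_left_cancel h3).symm
  intro x hx y hy
  have part1 : x * star y + star (x * star y) = (2 * inn x y) • (1 : A) := by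
    rw [star_mul, star_star]; exact key x hx y hy
  refine ⟨part1, ?_, ?_, ?_⟩
  · -- Cauchy–Schwarz via discriminant
    have h := discrim_le_zero (a := inn y y) (b := 2 * inn x y) (c := inn x x) ?_
    · unfold discrim at h; nlinarith [h]
    · intro t
      have h' : inn y y * t ^ 2 + 2 * inn x y * t + inn x x
          = inn (x + t • y) (x + t • y) := by
        simp only [map_add, map_smul, LinearMap.add_apply, LinearMap.smul_apply,
          smul_eq_mul]
        rw [hsymm y x]; ring
      nlinarith [hpos (x + t • y), h']
  · -- equality → real
    intro heq
    by_cases hyy : inn y y = 0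
    · have hy0 : y = 0 := hdef y hyy
      exact ⟨0, by simp [hy0]⟩
    · have hz : inn (inn y y • x - inn x y • y) (inn y y • x - inn x y • y) = 0 := by
        simp only [map_sub, map_smul, LinearMap.sub_apply, LinearMap.smul_apply,
          smul_eq_mul]
        rw [hsymm y x]; linear_combination (- inn y y / 4) * heq
      have hz0 : inn y y • x - inn x y • y = 0 := hdef _ hz
      have hxy : inn y y • x = inn x y • y := by rwa [sub_eq_zero] at hz0
      have hmul : inn y y • (x * star y) = (inn x y * inn y y) • (1 : A) := by
        calc inn y y • (x * star y) = (inn y y • x) * star y := by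
              rw [smul_mul_assoc]
          _ = (inn x y • y) * star y := by rw [hxy]
          _ = inn x y • (y * star y) := by rw [smul_mul_assoc]
          _ = inn x y • (inn y y • (1 : A)) := by rw [← hnorm y hy]
          _ = (inn x y * inn y y) • (1 : A) := by rw [smul_smul]
      refine ⟨inn x y, ?_⟩
      have h2 := congrArg (fun z => (inn y y)⁻¹ • z) hmul
      simp only [smul_smul] at h2
      rw [inv_mul_cancel₀ hyy, one_smul] at h2
      rw [h2]
      congr 1
      field_simp
  · -- real → equality
    rintro ⟨r, hr⟩
    by_cases h10 : (1 : A) = 0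
    · have hx0 : x = 0 := by rw [← mul_one x, h10, mul_zero]
      have hy0 : y = 0 := by rw [← mul_one y, h10, mul_zero]
      simp [hx0, hy0]
    · have hinj : ∀ c d : ℝ, c • (1 : A) = d • (1 : A) → c = d := by
        intro c d h
        by_contra hne
        have : (c - d) • (1 : A) = 0 := by rw [sub_smul, h, sub_self]
        rcases smul_eq_zero.mp this with h' | h'
        · exact hne (by linarith [sub_eq_zero.mp (by linarith [h'] : c - d = 0)])
        · exact h10 h'
      -- r = inn x y
      have hry : y * star x = r • (1 : A) := by
        have := congrArg star hr
        rwa [star_mul, star_star, star_smul, star_one] at this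
      have htr : (r + r) • (1 : A) = (2 * inn x y) • (1 : A) := by
        have hk := key x hx y hy
        rw [hr, hry] at hk
        rw [add_smul]; exact hk
      have hr2 : r = inn x y := by have := hinj _ _ htr; linarith
      -- trace of y is real
      obtain ⟨s, hs⟩ : ∃ s : ℝ, y + star y = s • (1 : A) := by
        rcases hMQ y hy with ⟨c, hc⟩ | ⟨c, _, hc, _⟩
        · exact ⟨2 * c, by simp [hc, ← add_smul, two_mul]⟩
        · exact ⟨c, hc⟩
      have hsy : star y = s • (1 : A) - y := by
        rw [← hs]; abel
      -- (x * star y) * y = x * (star y * y) and star y * y = y * star y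
      have hcomm : star y * y = y * star y := by
        rw [hsy, sub_mul, mul_sub, smul_mul_assoc, mul_smul_comm, one_mul, mul_one]
      have hassoc : (x * star y) * y = x * (star y * y) := by
        rw [hsy]
        calc (x * (s • (1 : A) - y)) * y
            = (s • x - x * y) * y := by rw [mul_sub, mul_smul_comm, mul_one]
          _ = s • (x * y) - x * (y * y) := by rw [sub_mul, smul_mul_assoc, hRA]
          _ = x * (s • y - y * y) := by rw [mul_sub, mul_smul_comm]
          _ = x * ((s • (1 : A) - y) * y) := by
              rw [sub_mul, smul_mul_assoc, one_mul]
      have hkey : r • y = inn y y • x := by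
        calc r • y = (r • (1 : A)) * y := by rw [smul_mul_assoc, one_mul]
          _ = (x * star y) * y := by rw [hr]
          _ = x * (star y * y) := hassoc
          _ = x * (y * star y) := by rw [hcomm]
          _ = x * (inn y y • (1 : A)) := by rw [hnorm y hy]
          _ = inn y y • (x * 1) := by rw [mul_smul_comm]
          _ = inn y y • x := by rw [mul_one]
      have hfin : r * inn y x = inn y y * inn x x := by
        have := congrArg (fun z => inn z x) hkey
        simpa [map_smul] using this
      rw [hsymm y x, ← hr2] at hfin
      rw [← hr2]; linear_combination 4 * hfin
end

section
/- Let x, y belong to a hypercomplex subspace M of a real alternative *-algebra A (so that t(x y^c) ∈ ℝ and n(x y^c) = n(x)n(y) ∈ ℝ). Then x y^c belongs to the quadratic cone Q_A of A. -/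
/-- Let `x, y` belong to a hypercomplex subspace `M` of a real alternative
*-algebra `A` (a real subspace with `ℝ ⊂ M ⊂ Q_A` of dimension `> 2`, carrying
an inner product with `‖x‖² = n(x)` on `M`; so that `t(x yᶜ) ∈ ℝ` and
`n(x yᶜ) = n(x) n(y) ∈ ℝ`).  Then `x yᶜ` belongs to the quadratic cone `Q_A`. -/
theorem mul_conj_mem_quadCone {A : Type*} [NonAssocRing A]
    [Module ℝ A] [IsScalarTower ℝ A A] [SMulCommClass ℝ A A]
    [StarRing A] [StarModule ℝ A]
    (hLA : ∀ x y : A, x * x * y = x * (x * y))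
    (hRA : ∀ x y : A, x * y * y = x * (y * y))
    (hFA : ∀ x y : A, x * y * x = x * (y * x))
    (inn : A →ₗ[ℝ] A →ₗ[ℝ] ℝ)
    (hsymm : ∀ x y : A, inn x y = inn y x)
    (hpos : ∀ x : A, 0 ≤ inn x x)
    (hdef : ∀ x : A, inn x x = 0 → x = 0)
    (M : Submodule ℝ A) (hone : (1 : A) ∈ M)
    (hMQ : ∀ x ∈ M, x ∈ quadCone A)
    (hrank : 2 < Module.finrank ℝ M)
    (hnorm : ∀ x ∈ M, (inn x x) • (1 : A) = x * star x)
    (htr : ∀ x ∈ M, ∀ y ∈ M,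
      x * star y + star (x * star y) = (2 * inn x y) • (1 : A))
    (hnmul : ∀ x ∈ M, ∀ y ∈ M,
      (x * star y) * star (x * star y) = (inn x x * inn y y) • (1 : A)) :
    ∀ x ∈ M, ∀ y ∈ M, x * star y ∈ quadCone A := by
  intro x hx y hy
  have key : ∀ t : ℝ, 0 ≤ inn y y * (t * t) + (2 * inn x y) * t + inn x x := by
    intro t
    have h0 := hpos (x + t • y)
    have hexp : inn (x + t • y) (x + t • y)
        = inn y y * (t * t) + (2 * inn x y) * t + inn x x := by
      simp only [map_add, map_smul, LinearMap.add_apply, LinearMap.smul_apply,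
        smul_eq_mul, hsymm y x]
      ring
    linarith [hexp ▸ h0]
  have hd := discrim_le_zero key
  rw [discrim] at hd
  have hcs : (inn x y) ^ 2 ≤ inn x x * inn y y := by nlinarith
  rcases lt_or_eq_of_le hcs with hlt | heq
  · right
    exact ⟨2 * inn x y, inn x x * inn y y, htr x hx y hy, hnmul x hx y hy,
      by nlinarith⟩
  · left
    by_cases ha : inn x x = 0
    · have hx0 : x = 0 := hdef x ha
      exact ⟨0, by simp [hx0]⟩
    · set z : A := (inn x x) • y - (inn x y) • x with hz
      have hzz : inn z z = 0 := by
        simp only [hz, map_sub, map_smul, LinearMap.sub_apply,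
          LinearMap.smul_apply, smul_eq_mul, hsymm y x]
        linear_combination (-(inn x) x) * heq
      have hz0 : z = 0 := hdef z hzz
      have hay : (inn x x) • y = (inn x y) • x := sub_eq_zero.mp hz0
      refine ⟨inn x y, ?_⟩
      have h1 : (inn x x) • (x * star y) = (inn x y * inn x x) • (1 : A) := by
        calc (inn x x) • (x * star y) = x * ((inn x x) • star y) := by
              rw [mul_smul_comm]
          _ = x * star ((inn x x) • y) := by rw [star_smul]; rfl
          _ = x * star ((inn x y) • x) := by rw [hay]
          _ = x * ((inn x y) • star x) := by rw [star_smul]; rfl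
          _ = (inn x y) • (x * star x) := by rw [mul_smul_comm]
          _ = (inn x y) • ((inn x x) • (1 : A)) := by rw [hnorm x hx]
          _ = (inn x y * inn x x) • (1 : A) := by rw [smul_smul]
      have := smul_right_injective A ha
        (h1.trans (by rw [mul_comm, ← smul_smul]))
      exact this
end

section
/- Let x be a quaternion and n ∈ ℕ. Then the Cauchy–Riemann–Fueter operator applied to x^n satisfies ∂̄_CRF(x^n) = -Σ_{k=0}^{n-1} x^{n-1-k} (x̄)^k, where ∂̄_CRF = (1/2)(∂/∂x₀ + i ∂/∂x₁ + j ∂/∂x₂ + k ∂/∂x₃). -/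
open scoped Quaternion

/-- The quaternion imaginary units. -/
def qI : ℍ[ℝ] := ⟨0, 1, 0, 0⟩
def qJ : ℍ[ℝ] := ⟨0, 0, 1, 0⟩
def qK : ℍ[ℝ] := ⟨0, 0, 0, 1⟩

lemma hasFDerivAt_qpow (n : ℕ) (x : ℍ[ℝ]) :
    HasFDerivAt (fun y : ℍ[ℝ] => y ^ n)
      (∑ k ∈ Finset.range n,
        ContinuousLinearMap.mulLeftRight ℝ ℍ[ℝ] (x ^ k) (x ^ (n - 1 - k))) x := by
  induction n with
  | zero => simpa using hasFDerivAt_const (1 : ℍ[ℝ]) x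
  | succ n ih =>
    have h := ih.mul' (hasFDerivAt_id x)
    simp only [id_eq] at h
    have heq : (x ^ n • ContinuousLinearMap.id ℝ ℍ[ℝ] +
        MulOpposite.op x • (∑ k ∈ Finset.range n,
          ContinuousLinearMap.mulLeftRight ℝ ℍ[ℝ] (x ^ k) (x ^ (n - 1 - k))))
        = ∑ k ∈ Finset.range (n + 1),
          ContinuousLinearMap.mulLeftRight ℝ ℍ[ℝ] (x ^ k) (x ^ (n + 1 - 1 - k)) := by
      refine ContinuousLinearMap.ext fun v => ?_
      simp only [ContinuousLinearMap.add_apply, ContinuousLinearMap.smul_apply,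
        ContinuousLinearMap.id_apply, ContinuousLinearMap.smulRight_apply,
        ContinuousLinearMap.sum_apply, ContinuousLinearMap.mulLeftRight_apply,
        smul_eq_mul, op_smul_eq_mul, Finset.sum_range_succ]
      rw [Finset.sum_mul]
      have hsum : ∀ k ∈ Finset.range n,
          x ^ k * v * x ^ (n - 1 - k) * x = x ^ k * v * x ^ (n - k) := by
        intro k hk
        have hk' := Finset.mem_range.mp hk
        rw [mul_assoc, ← pow_succ]
        congr 2
        omega
      rw [Finset.sum_congr rfl hsum]
      simp [Nat.sub_self, add_comm]
    rw [heq] at h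
    have hfun : (fun y : ℍ[ℝ] => y ^ n) * id = fun y : ℍ[ℝ] => y ^ (n + 1) := by
      funext y; rw [pow_succ]; rfl
    rwa [hfun] at h

lemma fderiv_qpow_apply (n : ℕ) (x v : ℍ[ℝ]) :
    fderiv ℝ (fun y : ℍ[ℝ] => y ^ n) x v
      = ∑ k ∈ Finset.range n, x ^ k * v * x ^ (n - 1 - k) := by
  rw [(hasFDerivAt_qpow n x).fderiv]
  simp [ContinuousLinearMap.sum_apply]

lemma quat_key (q : ℍ[ℝ]) :
    q + qI * q * qI + qJ * q * qJ + qK * q * qK = (-2 : ℝ) • star q := by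
  ext <;> simp <;> simp [qI, qJ, qK] <;> ring

/-- For a quaternion `x` and `n ∈ ℕ`, the Cauchy–Riemann–Fueter operator
`∂̄_CRF = (1/2)(∂/∂x₀ + i ∂/∂x₁ + j ∂/∂x₂ + k ∂/∂x₃)` applied to `x ↦ xⁿ`
satisfies `∂̄_CRF(xⁿ) = - ∑_{k=0}^{n-1} x^{n-1-k} (x̄)^k`. -/
theorem CRF_of_pow (n : ℕ) (x : ℍ[ℝ]) :
    (2 : ℝ)⁻¹ •
      (fderiv ℝ (fun y : ℍ[ℝ] => y ^ n) x 1
        + qI * fderiv ℝ (fun y : ℍ[ℝ] => y ^ n) x qI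
        + qJ * fderiv ℝ (fun y : ℍ[ℝ] => y ^ n) x qJ
        + qK * fderiv ℝ (fun y : ℍ[ℝ] => y ^ n) x qK)
    = -∑ k ∈ Finset.range n, x ^ (n - 1 - k) * (star x) ^ k := by
  simp only [fderiv_qpow_apply, Finset.mul_sum]
  rw [← Finset.sum_add_distrib, ← Finset.sum_add_distrib, ← Finset.sum_add_distrib,
    Finset.smul_sum]
  have hterm : ∀ k ∈ Finset.range n,
      (2 : ℝ)⁻¹ • (x ^ k * 1 * x ^ (n - 1 - k) + qI * (x ^ k * qI * x ^ (n - 1 - k))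
        + qJ * (x ^ k * qJ * x ^ (n - 1 - k)) + qK * (x ^ k * qK * x ^ (n - 1 - k)))
      = -(x ^ (n - 1 - k) * (star x) ^ k) := by
    intro k hk
    have h : x ^ k * 1 * x ^ (n - 1 - k) + qI * (x ^ k * qI * x ^ (n - 1 - k))
        + qJ * (x ^ k * qJ * x ^ (n - 1 - k)) + qK * (x ^ k * qK * x ^ (n - 1 - k))
        = (x ^ k + qI * x ^ k * qI + qJ * x ^ k * qJ + qK * x ^ k * qK) * x ^ (n - 1 - k) := by
      noncomm_ring
    have hc : (star x) ^ k * x ^ (n - 1 - k) = x ^ (n - 1 - k) * (star x) ^ k := by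
      have hcomm : Commute (star x) x := by
        unfold Commute SemiconjBy
        rw [Quaternion.star_mul_self, ← Quaternion.self_mul_star]
      exact (hcomm.pow_pow k (n - 1 - k)).eq
    rw [h, quat_key, star_pow, smul_mul_assoc, hc, smul_smul]
    norm_num
  rw [Finset.sum_congr rfl hterm, ← Finset.sum_neg_distrib]
end

section
/- For every n ∈ ℕ and x in a hypercomplex subspace M of dimension m+1 of a real alternative *-algebra, with orthonormal basis B = (1, v₁, …, v_m), the Cauchy–Riemann operator ∂̄_B = (1/2)(∂₀ + v₁∂₁ + ⋯ + v_m∂_m) satisfies ∂̄_B(x^n) = ((1-m)/2) (x - x^c)^{-1}(x^n - (x^c)^n) for x ∉ ℝ. -/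
noncomputable section
namespace PaperStmt

variable {A : Type*} [NormedAddCommGroup A] [NormedSpace ℝ A] [One A] [Mul A] {m : ℕ}

/-- Partial derivative in the `i`-th coordinate direction. -/
def pd (i : Fin (m + 1)) (f : (Fin (m + 1) → ℝ) → A) : (Fin (m + 1) → ℝ) → A :=
  fun x => fderiv ℝ f x (Pi.single i 1)

/-- The Cauchy–Riemann operator `∂̄_B = (1/2)(∂₀ + ∑ᵢ vᵢ ∂ᵢ)` induced by the
basis `B = (1, v₁, …, v_m)` (so `v 0 = 1`). -/
def dbar (v : Fin (m + 1) → A) (f : (Fin (m + 1) → ℝ) → A) : (Fin (m + 1) → ℝ) → A :=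
  fun x => (2 : ℝ)⁻¹ •
    (pd 0 f x + ∑ i ∈ Finset.univ.erase (0 : Fin (m + 1)), v i * pd i f x)

/-- Powers in a (not necessarily associative) algebra, bracketed to the left. -/
def pw (a : A) : ℕ → A
  | 0 => 1
  | n + 1 => pw a n * a

/-- The point of the hypercomplex subspace `M` with coordinates `x` w.r.t. the
basis `(1, v₁, …, v_m)`. -/
def iot (v : Fin (m + 1) → A) (x : Fin (m + 1) → ℝ) : A :=
  ∑ i : Fin (m + 1), x i • v i

/-- The *-conjugate `xᶜ` of the point with coordinates `x`. -/
def iotConj (v : Fin (m + 1) → A) (x : Fin (m + 1) → ℝ) : A :=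
  x 0 • (1 : A) - ∑ i ∈ Finset.univ.erase (0 : Fin (m + 1)), x i • v i

structure Coef where
  p : ℝ
  q : ℝ
  s : ℝ
  t : ℝ
  A : ℝ
  B : ℝ
  C : ℝ
  D : ℝ

def coef (x0 r : ℝ) : ℕ → Coef
  | 0 => ⟨1, 0, 0, 0, 0, 0, 0, 0⟩
  | n + 1 =>
    ⟨x0 * (coef x0 r n).p - r * (coef x0 r n).q,
     (coef x0 r n).p + x0 * (coef x0 r n).q,
     x0 * (coef x0 r n).s - r * (coef x0 r n).t + (coef x0 r n).p,
     (coef x0 r n).s + x0 * (coef x0 r n).t + (coef x0 r n).q,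
     x0 * (coef x0 r n).A - r * (coef x0 r n).B - 2 * (coef x0 r n).C,
     (coef x0 r n).A + x0 * (coef x0 r n).B - 2 * (coef x0 r n).D,
     x0 * (coef x0 r n).C + r * (coef x0 r n).D + (coef x0 r n).p,
     -(coef x0 r n).C + x0 * (coef x0 r n).D + (coef x0 r n).q⟩

lemma coef_key (x0 r μ : ℝ) : ∀ n : ℕ,
    (coef x0 r n).s - μ * (coef x0 r n).C - r * (coef x0 r n).B = (1 - μ) * (coef x0 r n).q
    ∧ (coef x0 r n).t + (coef x0 r n).A + (μ - 2) * (coef x0 r n).D = 0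
  | 0 => by simp [coef]
  | n + 1 => by
    obtain ⟨h1, h2⟩ := coef_key x0 r μ n
    refine ⟨?_, ?_⟩
    · simp only [coef]
      linear_combination x0 * h1 - r * h2
    · simp only [coef]
      linear_combination x0 * h2 + h1

/-- For every `n ∈ ℕ` and every non-real `x` in a hypercomplex subspace `M` of
dimension `m+1` of a real alternative *-algebra, with orthonormal basis
`B = (1, v₁, …, v_m)`, the Cauchy–Riemann operator satisfies
`∂̄_B(xⁿ) = ((1-m)/2) (x - xᶜ)⁻¹ (xⁿ - (xᶜ)ⁿ)`
(here `y` denotes the two-sided inverse of `x - xᶜ`). -/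
theorem dbar_pow
    (hbil : IsBoundedBilinearMap ℝ fun p : A × A => p.1 * p.2)
    (hone : ∀ a : A, 1 * a = a) (hone' : ∀ a : A, a * 1 = a)
    (hLA : ∀ x y : A, x * x * y = x * (x * y))
    (hRA : ∀ x y : A, x * y * y = x * (y * y))
    (hFA : ∀ x y : A, x * y * x = x * (y * x))
    (hm : 2 ≤ m)
    (v : Fin (m + 1) → A) (hv0 : v 0 = 1)
    (hsq : ∀ i : Fin (m + 1), i ≠ 0 → v i * v i = -1)
    (hanti : ∀ i j : Fin (m + 1), i ≠ 0 → j ≠ 0 → i ≠ j → v i * v j = -(v j * v i))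
    (n : ℕ) (x : Fin (m + 1) → ℝ)
    (hx : ∃ i : Fin (m + 1), i ≠ 0 ∧ x i ≠ 0)
    (y : A)
    (hy1 : y * (iot v x - iotConj v x) = 1)
    (hy2 : (iot v x - iotConj v x) * y = 1) :
    dbar v (fun c => pw (iot v c) n) x
      = (((1 : ℝ) - m) / 2) • (y * (pw (iot v x) n - pw (iotConj v x) n)) := by
  classical
  -- abbreviations
  obtain ⟨E, hE⟩ : ∃ E : Finset (Fin (m + 1)), E = Finset.univ.erase 0 := ⟨_, rfl⟩
  obtain ⟨w, hw⟩ : ∃ w : A, w = ∑ i ∈ E, x i • v i := ⟨_, rfl⟩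
  obtain ⟨r, hr⟩ : ∃ r : ℝ, r = ∑ i ∈ E, (x i) ^ 2 := ⟨_, rfl⟩
  -- bilinearity consequences
  have mul_add' : ∀ a b c : A, a * (b + c) = a * b + a * c := fun a b c => hbil.add_right a b c
  have add_mul' : ∀ a b c : A, (a + b) * c = a * c + b * c := fun a b c => hbil.add_left a b c
  have smul_mul' : ∀ (c : ℝ) (a b : A), (c • a) * b = c • (a * b) := fun c a b => hbil.smul_left c a b
  have mul_smul' : ∀ (c : ℝ) (a b : A), a * (c • b) = c • (a * b) := fun c a b => hbil.smul_right c a b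
  have mul_zero' : ∀ a : A, a * 0 = 0 := fun a => by
    have := hbil.smul_right 0 a 0; simpa using this
  have zero_mul' : ∀ a : A, 0 * a = 0 := fun a => by
    have := hbil.smul_left 0 0 a; simpa using this
  have neg_mul' : ∀ a b : A, (-a) * b = -(a * b) := fun a b => by
    rw [← neg_one_smul ℝ a, smul_mul', neg_one_smul]
  have mul_neg' : ∀ a b : A, a * (-b) = -(a * b) := fun a b => by
    rw [← neg_one_smul ℝ b, mul_smul', neg_one_smul]
  have mul_sub' : ∀ a b c : A, a * (b - c) = a * b - a * c := fun a b c => by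
    rw [sub_eq_add_neg, mul_add', mul_neg', sub_eq_add_neg]
  have sub_mul' : ∀ a b c : A, (a - b) * c = a * c - b * c := fun a b c => by
    rw [sub_eq_add_neg, add_mul', neg_mul', sub_eq_add_neg]
  have mul_sum' : ∀ (a : A) (s : Finset (Fin (m + 1))) (f : Fin (m + 1) → A),
      a * ∑ i ∈ s, f i = ∑ i ∈ s, a * f i := by
    intro a s f
    induction s using Finset.induction_on with
    | empty => simpa using mul_zero' a
    | insert _ _ hns ih => rw [Finset.sum_insert hns, Finset.sum_insert hns, mul_add', ih]
  have sum_mul' : ∀ (s : Finset (Fin (m + 1))) (f : Fin (m + 1) → A) (a : A),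
      (∑ i ∈ s, f i) * a = ∑ i ∈ s, f i * a := by
    intro s f a
    induction s using Finset.induction_on with
    | empty => simpa using zero_mul' a
    | insert _ _ hns ih => rw [Finset.sum_insert hns, Finset.sum_insert hns, add_mul', ih]
  have mul_negone : ∀ a : A, a * (-1) = -a := fun a => by
    rw [mul_neg', hone']
  -- membership facts
  have hmemE : ∀ i, i ∈ E ↔ i ≠ 0 := fun i => by simp [hE]
  have hcardE : E.card = m := by
    simp [hE, Finset.card_erase_of_mem]
  -- basic decompositions
  have hiotx : iot v x = x 0 • (1 : A) + w := by
    rw [iot, hw, ← Finset.add_sum_erase _ _ (Finset.mem_univ 0), hv0, hE]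
  have hconj : iotConj v x = x 0 • (1 : A) - w := by
    rw [iotConj, hw, hE]
  -- pairwise products
  have hpair : ∀ i ∈ E, ∀ j ∈ E, v i * v j + v j * v i
      = if j = i then (-2 : ℝ) • (1 : A) else 0 := by
    intro i hi j hj
    rcases eq_or_ne j i with rfl | hne
    · rw [if_pos rfl, hsq j ((hmemE j).1 hj)]
      have : ((-2 : ℝ) • (1 : A)) = -1 + -1 := by
        rw [neg_smul, ← neg_add]
        norm_num [two_smul]
      rw [this]
    · rw [if_neg hne, hanti i j ((hmemE i).1 hi) ((hmemE j).1 hj) (Ne.symm hne), neg_add_cancel]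
  -- v i * w + w * v i
  have hviwsum : ∀ i ∈ E, v i * w + w * v i = (-(2 * x i)) • (1 : A) := by
    intro i hi
    rw [hw, mul_sum', sum_mul', ← Finset.sum_add_distrib]
    have hcong : ∀ j ∈ E, v i * (x j • v j) + (x j • v j) * v i
        = x j • (if j = i then (-2 : ℝ) • (1 : A) else 0) := by
      intro j hj
      rw [mul_smul', smul_mul', ← smul_add, hpair i hi j hj]
    rw [Finset.sum_congr rfl hcong,
      Finset.sum_eq_single_of_mem i hi (fun j _ hne => by rw [if_neg hne, smul_zero]),
      if_pos rfl, smul_smul]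
    congr 1
    ring
  have hviw : ∀ i ∈ E, v i * w = (-(2 * x i)) • (1 : A) - w * v i := by
    intro i hi
    rw [eq_sub_iff_add_eq, hviwsum i hi]
  -- w * w = -r
  have hww : w * w = (-r) • (1 : A) := by
    have h2 : (2 : ℝ) • (w * w) = (2 : ℝ) • ((-r) • (1 : A)) := by
      calc (2 : ℝ) • (w * w) = w * w + w * w := two_smul ℝ _
        _ = ∑ i ∈ E, ((x i • v i) * w + w * (x i • v i)) := by
            rw [show w * w + w * w
                  = (∑ i ∈ E, x i • v i) * w + w * (∑ i ∈ E, x i • v i) by rw [← hw],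
              sum_mul', mul_sum', ← Finset.sum_add_distrib]
        _ = ∑ i ∈ E, (-2 * (x i) ^ 2) • (1 : A) := by
            refine Finset.sum_congr rfl fun i hi => ?_
            rw [smul_mul', mul_smul', ← smul_add, hviwsum i hi, smul_smul]
            congr 1
            ring
        _ = (2 : ℝ) • ((-r) • (1 : A)) := by
            rw [← Finset.sum_smul, smul_smul]
            congr 1
            rw [hr, ← Finset.mul_sum]
            ring
    calc w * w = (2 : ℝ)⁻¹ • ((2 : ℝ) • (w * w)) := (inv_smul_smul₀ two_ne_zero _).symm
      _ = (2 : ℝ)⁻¹ • ((2 : ℝ) • ((-r) • (1 : A))) := by rw [h2]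
      _ = (-r) • (1 : A) := inv_smul_smul₀ two_ne_zero _
  -- more product identities
  have hwviw : ∀ i ∈ E, (w * v i) * w = r • v i - (2 * x i) • w := by
    intro i hi
    rw [hFA w (v i), hviw i hi, mul_sub', mul_smul', hone', ← hLA, hww, smul_mul', hone]
    module
  have hviwvi : ∀ i ∈ E, v i * (w * v i) = (-(2 * x i)) • v i + w := by
    intro i hi
    rw [← hFA (v i) w, hviw i hi, sub_mul', smul_mul', hone, hRA,
      hsq i ((hmemE i).1 hi), mul_negone]
    module
  -- powers in the plane spanned by 1 and u
  have hpow : ∀ u : A, u * u = (-r) • (1 : A) → ∀ k : ℕ,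
      pw (x 0 • (1 : A) + u) k
        = (coef (x 0) r k).p • (1 : A) + (coef (x 0) r k).q • u := by
    intro u hu k
    induction k with
    | zero => simp [pw, coef]
    | succ k ih =>
      rw [show pw (x 0 • (1 : A) + u) (k + 1)
            = pw (x 0 • (1 : A) + u) k * (x 0 • (1 : A) + u) from rfl, ih]
      simp only [coef, add_mul', mul_add', smul_mul', mul_smul', hone, hone', hu]
      module
  -- the linear map underlying iot
  obtain ⟨L, hLfun, hLsingle⟩ :
      ∃ L : (Fin (m + 1) → ℝ) →L[ℝ] A, (⇑L = iot v) ∧ ∀ i, L (Pi.single i 1) = v i := by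
    refine ⟨∑ i : Fin (m + 1), (ContinuousLinearMap.proj i).smulRight (v i), ?_, ?_⟩
    · funext c
      simp [iot, ContinuousLinearMap.sum_apply]
    · intro i
      simp [ContinuousLinearMap.sum_apply, Pi.single_apply, ite_smul]
  have hLd : HasFDerivAt (iot v) L x := by
    rw [← hLfun]; exact L.hasFDerivAt
  -- the derivative of the power function, in coordinates
  have hD : ∀ k : ℕ, ∃ F : (Fin (m + 1) → ℝ) →L[ℝ] A,
      HasFDerivAt (fun c => pw (iot v c) k) F x ∧
      F (Pi.single 0 1) = (coef (x 0) r k).s • (1 : A) + (coef (x 0) r k).t • w ∧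
      ∀ i ∈ E, F (Pi.single i 1)
        = (x i * (coef (x 0) r k).A) • (1 : A) + (x i * (coef (x 0) r k).B) • w
          + (coef (x 0) r k).C • v i + (coef (x 0) r k).D • (w * v i) := by
    intro k
    induction k with
    | zero =>
      refine ⟨0, hasFDerivAt_const 1 x, by simp [coef], fun i hi => by simp [coef]⟩
    | succ k ih =>
      obtain ⟨F, hF, hF0, hFi⟩ := ih
      refine ⟨(hbil.deriv (pw (iot v x) k, iot v x)).comp (F.prod L), ?_, ?_, ?_⟩
      · exact (hbil.hasFDerivAt (pw (iot v x) k, iot v x)).comp x (hF.prodMk hLd)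
      · have hGval : ((hbil.deriv (pw (iot v x) k, iot v x)).comp (F.prod L)) (Pi.single 0 1)
            = pw (iot v x) k * L (Pi.single 0 1) + F (Pi.single 0 1) * iot v x := rfl
        rw [hGval, hLsingle 0, hv0, hone', hF0, hiotx, hpow w hww k]
        simp only [coef, add_mul', mul_add', smul_mul', mul_smul', hone, hone', hww]
        module
      · intro i hi
        have hGval : ((hbil.deriv (pw (iot v x) k, iot v x)).comp (F.prod L)) (Pi.single i 1)
            = pw (iot v x) k * L (Pi.single i 1) + F (Pi.single i 1) * iot v x := rfl
        rw [hGval, hLsingle i, hFi i hi, hiotx, hpow w hww k]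
        simp only [coef, add_mul', mul_add', smul_mul', mul_smul', hone, hone', hww,
          hviw i hi, hwviw i hi]
        module
  obtain ⟨F, hF, hF0, hFi⟩ := hD n
  obtain ⟨K, hK⟩ : ∃ K : Coef, K = coef (x 0) r n := ⟨_, rfl⟩
  obtain ⟨k1, k2⟩ := coef_key (x 0) r (m : ℝ) n
  rw [← hK] at k1 k2 hF0 hFi
  have hpd : ∀ i : Fin (m + 1),
      pd i (fun c => pw (iot v c) n) x = F (Pi.single i 1) := by
    intro i
    show fderiv ℝ (fun c => pw (iot v c) n) x (Pi.single i 1) = _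
    rw [hF.fderiv]
  -- the sum over the imaginary directions
  have hsum : ∑ i ∈ E, v i * pd i (fun c => pw (iot v c) n) x
      = (-(r * K.B) - (m : ℝ) * K.C) • (1 : A) + (K.A + ((m : ℝ) - 2) * K.D) • w := by
    have hterm : ∀ i ∈ E, v i * pd i (fun c => pw (iot v c) n) x
        = (-2 * K.B * (x i) ^ 2 - K.C) • (1 : A) + K.D • w
          + ((K.A - 2 * K.D) * x i) • v i + (-K.B * x i) • (w * v i) := by
      intro i hi
      rw [hpd i, hFi i hi]
      simp only [mul_add', mul_smul', hone', hsq i ((hmemE i).1 hi), hviw i hi,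
        hviwvi i hi]
      module
    rw [Finset.sum_congr rfl hterm, Finset.sum_add_distrib, Finset.sum_add_distrib,
      Finset.sum_add_distrib]
    have h1 : ∑ i ∈ E, (-2 * K.B * (x i) ^ 2 - K.C) • (1 : A)
        = (-2 * K.B * r - (m : ℝ) * K.C) • (1 : A) := by
      rw [← Finset.sum_smul]
      congr 1
      rw [Finset.sum_sub_distrib, ← Finset.mul_sum, ← hr, Finset.sum_const, hcardE,
        nsmul_eq_mul]
    have h2 : ∑ _i ∈ E, K.D • w = (m : ℝ) • (K.D • w) := by
      rw [Finset.sum_const, hcardE, ← Nat.cast_smul_eq_nsmul ℝ]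
    have h3 : ∑ i ∈ E, ((K.A - 2 * K.D) * x i) • v i = (K.A - 2 * K.D) • w := by
      rw [hw, Finset.smul_sum]
      exact Finset.sum_congr rfl fun i _ => (smul_smul _ _ _).symm
    have h4 : ∑ i ∈ E, (-K.B * x i) • (w * v i) = (K.B * r) • (1 : A) := by
      have hc : ∀ i ∈ E, (-K.B * x i) • (w * v i) = (-K.B) • (w * (x i • v i)) := by
        intro i _
        rw [mul_smul', smul_smul]
      rw [Finset.sum_congr rfl hc, ← Finset.smul_sum, ← mul_sum', ← hw, hww, smul_smul]
      congr 1
      ring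
    rw [h1, h2, h3, h4]
    module
  -- the right-hand side
  have hdiff : iot v x - iotConj v x = (2 : ℝ) • w := by
    rw [hiotx, hconj]
    module
  have hyw : (2 : ℝ) • (y * w) = 1 := by rw [← mul_smul', ← hdiff, hy1]
  have hpwX : pw (iot v x) n = K.p • (1 : A) + K.q • w := by
    rw [hiotx, hpow w hww n, ← hK]
  have hnegw : (-w) * (-w) = (-r) • (1 : A) := by rw [neg_mul', mul_neg', neg_neg, hww]
  have hpwXc : pw (iotConj v x) n = K.p • (1 : A) + K.q • (-w) := by
    rw [hconj, sub_eq_add_neg, hpow (-w) hnegw n, ← hK]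
  have hsub : pw (iot v x) n - pw (iotConj v x) n = (2 * K.q) • w := by
    rw [hpwX, hpwXc]
    module
  have hq1 : (2 * K.q) • (y * w) = K.q • (1 : A) := by
    calc (2 * K.q) • (y * w) = K.q • ((2 : ℝ) • (y * w)) := by
          rw [smul_smul, mul_comm]
      _ = K.q • (1 : A) := by rw [hyw]
  have hfin : (2 : ℝ)⁻¹ • ((K.s • (1 : A) + K.t • w)
        + ((-(r * K.B) - (m : ℝ) * K.C) • (1 : A) + (K.A + ((m : ℝ) - 2) * K.D) • w))
      = (((1 : ℝ) - m) / 2) • (K.q • (1 : A)) := by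
    rw [show K.s = (1 - (m : ℝ)) * K.q + (m : ℝ) * K.C + r * K.B by linarith [k1],
      show K.t = -K.A - ((m : ℝ) - 2) * K.D by linarith [k2]]
    module
  show (2 : ℝ)⁻¹ • (pd 0 (fun c => pw (iot v c) n) x
      + ∑ i ∈ Finset.univ.erase (0 : Fin (m + 1)),
          v i * pd i (fun c => pw (iot v c) n) x) = _
  rw [← hE, hsum, hpd 0, hF0, hfin, hsub, mul_smul', hq1]


end PaperStmt
end
end
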